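/- arXiv:1210.1136 — 3 statements merged into one kernel-verified Lean document; each statement's English description precedes it below -/
import Mathlib

section
/- Counting via stopping times: in a K-armed stochastic bandit with any strategy, for every arm a, every horizon T > K, and every sequence (B_n)_{n≥1} of Borel subsets B_n ⊆ ℝⁿ, one has Σ_{t=K}^{T−1} P{ (X_{a,1}, …, X_{a,N_a(t)}) ∈ B_{N_a(t)} and A_{t+1} = a } ≤ Σ_{n=1}^{T−K} P{ (X_{a,1}, …, X_{a,n}) ∈ B_n }. -/
open MeasureTheory ProbabilityTheory Real ENNReal
open scoped Classical

section Bandit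

variable {Ω : Type*} [MeasurableSpace Ω]

/-- `pulls A a t ω` is `N_a(t)`, the number of rounds `s ∈ {1, …, t}` at which arm `a`
was chosen. -/
def pulls {K : ℕ} (A : ℕ → Ω → Fin K) (a : Fin K) (t : ℕ) (ω : Ω) : ℕ :=
  ((Finset.Icc 1 t).filter fun s => A s ω = a).card

/-- `reward X A s ω` is `Y_s = X_{A_s, N_{A_s}(s)}`, the payoff received at round `s`
(the draws `(X_{a,n})_{n ≥ 1}` of arm `a` are indexed here by `n - 1 ∈ ℕ`). -/
def reward {K : ℕ} (X : Fin K → ℕ → Ω → ℝ) (A : ℕ → Ω → Fin K) (s : ℕ) (ω : Ω) : ℝ :=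
  X (A s ω) (pulls A (A s ω) s ω - 1) ω

/-- The σ-algebra generated by `A_1, Y_1, …, A_t, Y_t`. -/
def hist {K : ℕ} (X : Fin K → ℕ → Ω → ℝ) (A : ℕ → Ω → Fin K) (t : ℕ) :
    MeasurableSpace Ω :=
  MeasurableSpace.comap
    (fun ω => fun s : Fin t => (A (s + 1) ω, reward X A (s + 1) ω)) inferInstance

end Bandit

section AuxLemmas

variable {Ω : Type*} [MeasurableSpace Ω] {K : ℕ} {A : ℕ → Ω → Fin K}

lemma pulls_succ (a : Fin K) (t : ℕ) (ω : Ω) :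
    pulls A a (t + 1) ω = pulls A a t ω + if A (t + 1) ω = a then 1 else 0 := by
  have h : Finset.Icc 1 (t + 1) = insert (t + 1) (Finset.Icc 1 t) := by
    ext s; simp [Finset.mem_Icc, Finset.mem_insert]; omega
  unfold pulls
  rw [h, Finset.filter_insert]
  by_cases hA : A (t + 1) ω = a
  · rw [if_pos hA, if_pos hA, Finset.card_insert_of_notMem (by simp)]
  · rw [if_neg hA, if_neg hA, add_zero]

lemma pulls_mono (a : Fin K) {t t' : ℕ} (h : t ≤ t') (ω : Ω) :
    pulls A a t ω ≤ pulls A a t' ω :=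
  Finset.card_le_card (Finset.filter_subset_filter _ (Finset.Icc_subset_Icc le_rfl h))

lemma pulls_at_K (hinit : ∀ s ω, 1 ≤ s → s ≤ K → (A s ω : ℕ) = s - 1)
    (a : Fin K) (ω : Ω) : pulls A a K ω = 1 := by
  have h : ((Finset.Icc 1 K).filter fun s => A s ω = a) = {(a : ℕ) + 1} := by
    ext s
    simp only [Finset.mem_filter, Finset.mem_Icc, Finset.mem_singleton]
    constructor
    · rintro ⟨⟨h1, h2⟩, h3⟩
      have := hinit s ω h1 h2
      have : (s : ℕ) - 1 = (a : ℕ) := by rw [← this, h3]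
      omega
    · rintro rfl
      have ha : (a : ℕ) < K := a.isLt
      refine ⟨⟨by omega, by omega⟩, ?_⟩
      have := hinit ((a : ℕ) + 1) ω (by omega) (by omega)
      exact Fin.ext (by omega)
  rw [pulls, h, Finset.card_singleton]

lemma pulls_le (hinit : ∀ s ω, 1 ≤ s → s ≤ K → (A s ω : ℕ) = s - 1)
    (a : Fin K) {t : ℕ} (ht : K ≤ t) (ω : Ω) : pulls A a t ω ≤ t - K + 1 := by
  obtain ⟨d, rfl⟩ := Nat.exists_eq_add_of_le ht
  clear ht
  induction d with
  | zero => simpa using (pulls_at_K hinit a ω).le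
  | succ d ih =>
    have h1 := pulls_succ (A := A) a (K + d) ω
    rw [show K + (d + 1) = (K + d) + 1 by omega] at *
    split at h1 <;> omega

lemma pulls_pos (hinit : ∀ s ω, 1 ≤ s → s ≤ K → (A s ω : ℕ) = s - 1)
    (a : Fin K) {t : ℕ} (ht : K ≤ t) (ω : Ω) : 1 ≤ pulls A a t ω := by
  have := pulls_at_K hinit a ω
  have := pulls_mono (A := A) a ht ω
  omega

lemma pulls_measurable (a : Fin K) (t : ℕ)
    (hA : ∀ u, 1 ≤ u → u ≤ t → Measurable (A u)) :
    Measurable fun ω => pulls A a t ω := by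
  have h : (fun ω => pulls A a t ω)
      = fun ω => ∑ s ∈ Finset.Icc 1 t, if A s ω = a then 1 else 0 := by
    funext ω; exact Finset.card_filter _ _
  rw [h]
  refine Finset.measurable_sum _ fun s hs => ?_
  simp only [Finset.mem_Icc] at hs
  exact Measurable.ite ((hA s hs.1 hs.2) (measurableSet_singleton a))
    measurable_const measurable_const

lemma reward_measurable (X : Fin K → ℕ → Ω → ℝ) (hmeas : ∀ a n, Measurable (X a n))
    (s : ℕ) (hA : ∀ u, 1 ≤ u → u ≤ s → Measurable (A u)) (hs : 1 ≤ s) :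
    Measurable (reward X A s) := by
  have key : reward X A s = (fun p : Ω × (Fin K × ℕ) => X p.2.1 (p.2.2 - 1) p.1) ∘
      fun ω => (ω, (A s ω, pulls A (A s ω) s ω)) := rfl
  rw [key]
  have h1 : Measurable fun p : Ω × (Fin K × ℕ) => X p.2.1 (p.2.2 - 1) p.1 :=
    measurable_from_prod_countable_left fun q => hmeas q.1 (q.2 - 1)
  have h2 : Measurable fun ω => pulls A (A s ω) s ω := by
    have : (fun ω => pulls A (A s ω) s ω)
        = (fun p : Ω × Fin K => pulls A p.2 s p.1) ∘ fun ω => (ω, A s ω) := rfl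
    rw [this]
    exact (measurable_from_prod_countable_left fun b => pulls_measurable b s hA).comp
      (measurable_id.prodMk (hA s hs le_rfl))
  exact h1.comp (measurable_id.prodMk ((hA s hs le_rfl).prodMk h2))

lemma A_measurable (X : Fin K → ℕ → Ω → ℝ) (hmeas : ∀ a n, Measurable (X a n))
    (hinit : ∀ s ω, 1 ≤ s → s ≤ K → (A s ω : ℕ) = s - 1)
    (hadapt : ∀ t, K ≤ t → Measurable[hist X A t] (A (t + 1)))
    (hK : 1 ≤ K) : ∀ s, 1 ≤ s → Measurable (A s) := by
  intro s
  induction s using Nat.strong_induction_on with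
  | _ s ih =>
    intro hs
    rcases le_or_gt s K with hsK | hsK
    · have : A s = fun _ => (⟨s - 1, by omega⟩ : Fin K) := by
        funext ω; exact Fin.ext (by simpa using hinit s ω hs hsK)
      rw [this]; exact measurable_const
    · obtain ⟨t, rfl⟩ : ∃ t, s = t + 1 := ⟨s - 1, by omega⟩
      have ht : K ≤ t := by omega
      have hAle : ∀ u, 1 ≤ u → u ≤ t → Measurable (A u) :=
        fun u h1 h2 => ih u (by omega) h1
      have hf : Measurable fun ω => fun i : Fin t =>
          (A ((i : ℕ) + 1) ω, reward X A ((i : ℕ) + 1) ω) := by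
        refine measurable_pi_lambda _ fun i => ?_
        have hi : (i : ℕ) + 1 ≤ t := by omega
        exact (hAle _ (by omega) hi).prodMk
          (reward_measurable X hmeas _ (fun u h1 h2 => hAle u h1 (h2.trans hi)) (by omega))
      exact (hadapt t ht).mono hf.comap_le le_rfl

end AuxLemmas

/-- Counting via stopping times. -/
theorem counting_via_stopping_times
    {Ω : Type*} [MeasurableSpace Ω] (P : Measure Ω) [IsProbabilityMeasure P]
    (K : ℕ) (hK : 2 ≤ K) (ν : Fin K → Measure ℝ) (hproba : ∀ a, IsProbabilityMeasure (ν a))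
    (X : Fin K → ℕ → Ω → ℝ) (hmeas : ∀ a n, Measurable (X a n))
    (hlaw : ∀ a n, Measure.map (X a n) P = ν a)
    (hindep : iIndepFun (fun p : Fin K × ℕ => X p.1 p.2) P)
    (A : ℕ → Ω → Fin K)
    (hinit : ∀ s ω, 1 ≤ s → s ≤ K → (A s ω : ℕ) = s - 1)
    (hadapt : ∀ t, K ≤ t → Measurable[hist X A t] (A (t + 1)))
    (a : Fin K) (B : (n : ℕ) → Set (Fin n → ℝ)) (hB : ∀ n, MeasurableSet (B n))
    (T : ℕ) (hT : K < T) :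
    ∑ t ∈ Finset.Ico K T,
        P {ω | (fun i : Fin (pulls A a t ω) => X a (↑i) ω) ∈ B (pulls A a t ω)
            ∧ A (t + 1) ω = a}
      ≤ ∑ n ∈ Finset.Icc 1 (T - K), P {ω | (fun i : Fin n => X a (↑i) ω) ∈ B n} := by
  have hA : ∀ s, 1 ≤ s → Measurable (A s) :=
    A_measurable X hmeas hinit hadapt (by omega)
  set F : ℕ → Set Ω := fun n => {ω | (fun i : Fin n => X a (↑i) ω) ∈ B n} with hF
  set D : ℕ → ℕ → Set Ω := fun t n =>
    {ω | pulls A a t ω = n ∧ A (t + 1) ω = a} with hD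
  -- measurability
  have hFmeas : ∀ n, MeasurableSet (F n) := by
    intro n
    exact (measurable_pi_lambda (fun ω (i : Fin n) => X a (↑i) ω)
      fun i => hmeas a i) (hB n)
  have hDmeas : ∀ t n, K ≤ t → MeasurableSet (D t n) := by
    intro t n ht
    have h1 : MeasurableSet {ω | pulls A a t ω = n} :=
      (pulls_measurable a t fun u h1 h2 => hA u h1) (measurableSet_singleton n)
    have h2 : MeasurableSet {ω | A (t + 1) ω = a} :=
      (hA (t + 1) (by omega)) (measurableSet_singleton a)
    exact h1.inter h2
  -- step 1: per-t bound
  have step1 : ∀ t ∈ Finset.Ico K T,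
      P {ω | (fun i : Fin (pulls A a t ω) => X a (↑i) ω) ∈ B (pulls A a t ω)
          ∧ A (t + 1) ω = a}
        ≤ ∑ n ∈ Finset.Icc 1 (T - K), P (F n ∩ D t n) := by
    intro t ht
    simp only [Finset.mem_Ico] at ht
    refine le_trans (measure_mono ?_) (measure_biUnion_finset_le _ _)
    intro ω hω
    obtain ⟨h1, h2⟩ := hω
    have hnmem : pulls A a t ω ∈ Finset.Icc 1 (T - K) := by
      have := pulls_pos hinit a ht.1 ω
      have := pulls_le hinit a ht.1 ω
      simp only [Finset.mem_Icc]
      omega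
    exact Set.mem_iUnion₂.2 ⟨pulls A a t ω, hnmem, h1, rfl, h2⟩
  refine le_trans (Finset.sum_le_sum step1) ?_
  rw [Finset.sum_comm]
  refine Finset.sum_le_sum fun n hn => ?_
  -- step 2: for fixed n, the D t n are pairwise disjoint over t
  have key : ∀ t t' : ℕ, t < t' → Disjoint (F n ∩ D t n) (F n ∩ D t' n) := by
    intro t t' hlt
    refine Set.disjoint_left.2 fun ω hω hω' => ?_
    obtain ⟨-, hp, hAt⟩ := hω
    obtain ⟨-, hp', -⟩ := hω'
    have h1 : pulls A a (t + 1) ω = n + 1 := by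
      rw [pulls_succ, hp, if_pos hAt]
    have h2 : pulls A a (t + 1) ω ≤ pulls A a t' ω := pulls_mono a (by omega) ω
    omega
  have hdisj : (↑(Finset.Ico K T) : Set ℕ).PairwiseDisjoint fun t => F n ∩ D t n := by
    intro t ht t' ht' hne
    rcases lt_or_gt_of_ne hne with h | h
    · exact key t t' h
    · exact (key t' t h).symm
  have hsub : (⋃ t ∈ Finset.Ico K T, F n ∩ D t n) ⊆ F n := by
    intro ω hω
    simp only [Set.mem_iUnion] at hω
    obtain ⟨t, -, h, -⟩ := hω
    exact h
  calc ∑ t ∈ Finset.Ico K T, P (F n ∩ D t n)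
      = P (⋃ t ∈ Finset.Ico K T, F n ∩ D t n) := by
        refine (measure_biUnion_finset hdisj fun t ht => ?_).symm
        simp only [Finset.mem_Ico] at ht
        exact (hFmeas n).inter (hDmeas t n ht.1)
    _ ≤ P (F n) := measure_mono hsub
end

section
/- For any two probability measures ν and ν' on [0,1], the binary Kullback–Leibler divergence between their means is bounded by their Kullback–Leibler divergence: d_ber( E(ν), E(ν') ) ≤ KL(ν, ν'). -/
open MeasureTheory Real ENNReal
open scoped Classical

/-- Kullback–Leibler divergence between two measures, with value `∞` when the first
measure is not absolutely continuous with respect to the second (or when the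
log-likelihood ratio is not integrable). -/
noncomputable def KLdiv {α : Type*} [MeasurableSpace α] (μ ν : Measure α) : ℝ≥0∞ :=
  if μ ≪ ν ∧ Integrable (llr μ ν) μ then ENNReal.ofReal (∫ x, llr μ ν x ∂μ) else ⊤

/-- The binary Kullback–Leibler divergence `d_ber(p, q)` for `p, q ∈ [0,1]`, with the
conventions `0 log 0 = 0` and `d_ber(p, q) = +∞` whenever `q ∈ {0,1}` and `p ≠ q`. -/
noncomputable def dBer (p q : ℝ) : ℝ≥0∞ :=
  if q = 0 ∨ q = 1 then (if p = q then 0 else ⊤)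
  else ENNReal.ofReal (p * Real.log (p / q) + (1 - p) * Real.log ((1 - p) / (1 - q)))

lemma my_integral_llr_nonneg {α : Type*} [MeasurableSpace α] (μ ν : Measure α)
    [IsProbabilityMeasure μ] [IsProbabilityMeasure ν] (hμν : μ ≪ ν)
    (h : Integrable (llr μ ν) μ) : 0 ≤ ∫ x, llr μ ν x ∂μ := by
  have hint : Integrable (fun x ↦ (ν.rnDeriv μ x).toReal) μ :=
    Measure.integrable_toReal_rnDeriv
  have h1 : ∫ x, (ν.rnDeriv μ x).toReal ∂μ ≤ 1 := by
    calc ∫ x, (ν.rnDeriv μ x).toReal ∂μ ≤ (ν Set.univ).toReal := by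
          rw [← setIntegral_univ]
          exact Measure.setIntegral_toReal_rnDeriv_le (measure_ne_top ν _)
      _ = 1 := by simp
  have h2 : ∀ᵐ x ∂μ, - llr μ ν x ≤ (ν.rnDeriv μ x).toReal - 1 := by
    filter_upwards [exp_neg_llr hμν] with x hx
    have := Real.add_one_le_exp (- llr μ ν x)
    rw [hx] at this
    linarith
  have h3 : ∫ x, - llr μ ν x ∂μ ≤ ∫ x, ((ν.rnDeriv μ x).toReal - 1) ∂μ :=
    integral_mono_ae h.neg (hint.sub (integrable_const 1)) h2
  rw [integral_neg, integral_sub hint (integrable_const 1)] at h3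
  simp only [integral_const, probReal_univ, ENNReal.toReal_one, smul_eq_mul, one_mul] at h3
  linarith

lemma my_dv_bound {α : Type*} [MeasurableSpace α] (μ ν : Measure α)
    [IsProbabilityMeasure μ] [IsProbabilityMeasure ν] (hμν : μ ≪ ν)
    (h : Integrable (llr μ ν) μ) (f : α → ℝ) (hfμ : Integrable f μ)
    (hfν : Integrable (fun x ↦ exp (f x)) ν) :
    ∫ x, f x ∂μ - Real.log (∫ x, exp (f x) ∂ν) ≤ ∫ x, llr μ ν x ∂μ := by
  have hν' : IsProbabilityMeasure (ν.tilted f) := isProbabilityMeasure_tilted hfν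
  have hac : μ ≪ ν.tilted f := hμν.trans (absolutelyContinuous_tilted hfν)
  have hint : Integrable (llr μ (ν.tilted f)) μ := integrable_llr_tilted_right hμν hfμ h hfν
  have h0 : 0 ≤ ∫ x, llr μ (ν.tilted f) x ∂μ := my_integral_llr_nonneg μ _ hac hint
  rw [integral_llr_tilted_right hμν hfμ hfν h] at h0
  linarith

/-- For any two probability measures `ν`, `ν'` on `[0,1]`, the binary Kullback–Leibler
divergence between their means is bounded by their Kullback–Leibler divergence:
`d_ber(E(ν), E(ν')) ≤ KL(ν, ν')`. -/
theorem dBer_means_le_KL (ν ν' : Measure ℝ) [IsProbabilityMeasure ν] [IsProbabilityMeasure ν']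
    (hsupp : ν (Set.Icc (0 : ℝ) 1)ᶜ = 0) (hsupp' : ν' (Set.Icc (0 : ℝ) 1)ᶜ = 0) :
    dBer (∫ x, x ∂ν) (∫ x, x ∂ν') ≤ KLdiv ν ν' := by
  by_cases hKL : ν ≪ ν' ∧ Integrable (llr ν ν') ν
  swap
  · rw [KLdiv, if_neg hKL]; exact le_top
  obtain ⟨hac, hint⟩ := hKL
  rw [KLdiv, if_pos ⟨hac, hint⟩]
  set K : ℝ := ∫ x, llr ν ν' x ∂ν with hK
  have hmem : ∀ᵐ x ∂ν, x ∈ Set.Icc (0 : ℝ) 1 := by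
    rw [MeasureTheory.ae_iff]
    exact hsupp
  have hmem' : ∀ᵐ x ∂ν', x ∈ Set.Icc (0 : ℝ) 1 := by
    rw [MeasureTheory.ae_iff]
    exact hsupp'
  have hid : Integrable (fun x : ℝ ↦ x) ν := by
    refine Integrable.mono' (integrable_const 1) measurable_id.aestronglyMeasurable ?_
    filter_upwards [hmem] with x hx
    rw [Real.norm_eq_abs, abs_le]
    exact ⟨by linarith [hx.1], hx.2⟩
  have hid' : Integrable (fun x : ℝ ↦ x) ν' := by
    refine Integrable.mono' (integrable_const 1) measurable_id.aestronglyMeasurable ?_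
    filter_upwards [hmem'] with x hx
    rw [Real.norm_eq_abs, abs_le]
    exact ⟨by linarith [hx.1], hx.2⟩
  set p : ℝ := ∫ x, x ∂ν with hp
  set q : ℝ := ∫ x, x ∂ν' with hq
  have hp0 : 0 ≤ p := integral_nonneg_of_ae (by filter_upwards [hmem] with x hx; exact hx.1)
  have hp1 : p ≤ 1 := by
    have := integral_mono_ae hid (integrable_const 1)
      (by filter_upwards [hmem] with x hx; exact hx.2)
    simpa using this
  have hq0 : 0 ≤ q := integral_nonneg_of_ae (by filter_upwards [hmem'] with x hx; exact hx.1)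
  have hq1 : q ≤ 1 := by
    have := integral_mono_ae hid' (integrable_const 1)
      (by filter_upwards [hmem'] with x hx; exact hx.2)
    simpa using this
  by_cases hqz : q = 0
  · -- ν'-a.e. x = 0, hence ν-a.e. x = 0, so p = 0.
    have h0 : (fun x : ℝ ↦ x) =ᵐ[ν'] 0 :=
      (integral_eq_zero_iff_of_nonneg_ae
        (by filter_upwards [hmem'] with x hx; simpa using hx.1) hid').mp hqz
    have hν'null : ν' {x : ℝ | x ≠ 0} = 0 := by
      have := h0
      rw [Filter.EventuallyEq, MeasureTheory.ae_iff] at this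
      simpa using this
    have hνae : ∀ᵐ x ∂ν, x = 0 := by
      rw [MeasureTheory.ae_iff]
      exact hac (by simpa using hν'null)
    have hpz : p = 0 := by
      rw [hp]
      rw [integral_congr_ae (g := fun _ : ℝ ↦ (0:ℝ)) (by filter_upwards [hνae] with x hx; exact hx)]
      simp
    rw [hpz, hqz]
    simp [dBer]
  by_cases hqo : q = 1
  · have hsub : Integrable (fun x : ℝ ↦ 1 - x) ν' := (integrable_const 1).sub hid'
    have hz : ∫ x, (1 - x) ∂ν' = 0 := by
      rw [integral_sub (integrable_const 1) hid']
      simp only [integral_const, probReal_univ, ENNReal.toReal_one, smul_eq_mul, one_mul]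
      rw [← hq, hqo]
      ring
    have h0 : (fun x : ℝ ↦ 1 - x) =ᵐ[ν'] 0 :=
      (integral_eq_zero_iff_of_nonneg_ae
        (by filter_upwards [hmem'] with x hx; simpa using hx.2) hsub).mp hz
    have hν'null : ν' {x : ℝ | x ≠ 1} = 0 := by
      rw [Filter.EventuallyEq, MeasureTheory.ae_iff] at h0
      simp only [Pi.zero_apply, sub_eq_zero] at h0
      convert h0 using 2
      ext x
      simp [eq_comm]
    have hνae : ∀ᵐ x ∂ν, x = 1 := by
      rw [MeasureTheory.ae_iff]
      exact hac (by simpa using hν'null)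
    have hpo : p = 1 := by
      rw [hp]
      rw [integral_congr_ae (g := fun _ : ℝ ↦ (1:ℝ)) (by filter_upwards [hνae] with x hx; exact hx)]
      simp
    rw [hpo, hqo]
    simp [dBer]
  -- Main case: 0 < q < 1.
  have hqpos : 0 < q := lt_of_le_of_ne hq0 (Ne.symm hqz)
  have hqlt : q < 1 := lt_of_le_of_ne hq1 hqo
  rw [dBer, if_neg (by push_neg; exact ⟨hqz, hqo⟩)]
  refine ENNReal.ofReal_le_ofReal ?_
  -- Donsker–Varadhan applied to f = fun x ↦ l * x, for every l : ℝ.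
  have hDV : ∀ l : ℝ, l * p - Real.log (1 - q + q * Real.exp l) ≤ K := by
    intro l
    have hfν : Integrable (fun x : ℝ ↦ l * x) ν := hid.const_mul l
    have hexp : Integrable (fun x : ℝ ↦ Real.exp (l * x)) ν' := by
      refine Integrable.mono' (integrable_const (Real.exp |l|))
        (Real.continuous_exp.comp (continuous_const.mul continuous_id)).aestronglyMeasurable ?_
      filter_upwards [hmem'] with x hx
      rw [Real.norm_eq_abs, abs_of_pos (Real.exp_pos _), Real.exp_le_exp]
      calc l * x ≤ |l * x| := le_abs_self _
        _ = |l| * |x| := abs_mul l x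
        _ ≤ |l| * 1 := by
            refine mul_le_mul_of_nonneg_left ?_ (abs_nonneg l)
            rw [abs_le]; exact ⟨by linarith [hx.1], hx.2⟩
        _ = |l| := mul_one _
    have h1 := my_dv_bound ν ν' hac hint (fun x ↦ l * x) hfν hexp
    rw [integral_const_mul] at h1
    -- bound the mgf of ν' by that of the Bernoulli(q)
    have hB : ∫ x, Real.exp (l * x) ∂ν' ≤ 1 - q + q * Real.exp l := by
      have hptw : ∀ᵐ x ∂ν', Real.exp (l * x) ≤ (1 - x) + x * Real.exp l := by
        filter_upwards [hmem'] with x hx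
        have hcx := convexOn_exp.2 (Set.mem_univ (0 : ℝ)) (Set.mem_univ l)
          (by linarith [hx.2] : (0:ℝ) ≤ 1 - x) hx.1 (by ring)
        simp only [smul_eq_mul, mul_zero, zero_add, Real.exp_zero, mul_one] at hcx
        calc Real.exp (l * x) = Real.exp (x * l) := by rw [mul_comm]
          _ ≤ (1 - x) + x * Real.exp l := hcx
      have hi1 : Integrable (fun x : ℝ ↦ 1 - x) ν' := (integrable_const 1).sub hid'
      have hi2 : Integrable (fun x : ℝ ↦ x * Real.exp l) ν' := hid'.mul_const _
      have hrhsint : Integrable (fun x : ℝ ↦ (1 - x) + x * Real.exp l) ν' := hi1.add hi2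
      have := integral_mono_ae hexp hrhsint hptw
      calc ∫ x, Real.exp (l * x) ∂ν' ≤ ∫ x, ((1 - x) + x * Real.exp l) ∂ν' := this
        _ = 1 - q + q * Real.exp l := by
            rw [integral_add hi1 hi2, integral_sub (integrable_const 1) hid',
              integral_mul_const]
            simp only [integral_const, probReal_univ, ENNReal.toReal_one, smul_eq_mul, one_mul]
            try rw [← hq]
            try ring
      -- done
    have hposint : 0 < ∫ x, Real.exp (l * x) ∂ν' := integral_exp_pos hexp
    have hlog : Real.log (∫ x, Real.exp (l * x) ∂ν') ≤ Real.log (1 - q + q * Real.exp l) :=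
      Real.log_le_log hposint hB
    linarith
  by_cases hpz : p = 0
  · -- limit l → -∞
    rw [hpz]
    have hlim : Filter.Tendsto (fun l : ℝ ↦ l * 0 - Real.log (1 - q + q * Real.exp l))
        Filter.atBot (nhds (Real.log (1 / (1 - q)))) := by
      have h1 : Filter.Tendsto (fun l : ℝ ↦ 1 - q + q * Real.exp l) Filter.atBot
          (nhds (1 - q + q * 0)) :=
        tendsto_const_nhds.add (Real.tendsto_exp_atBot.const_mul q)
      have h2 : Filter.Tendsto (fun l : ℝ ↦ Real.log (1 - q + q * Real.exp l)) Filter.atBot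
          (nhds (Real.log (1 - q))) := by
        have hc : ContinuousAt Real.log (1 - q + q * 0) := by
          refine Real.continuousAt_log ?_
          simp only [mul_zero, add_zero]
          linarith
        have := hc.tendsto.comp h1
        simpa [Function.comp_def] using this
      have : Filter.Tendsto (fun l : ℝ ↦ l * 0 - Real.log (1 - q + q * Real.exp l))
          Filter.atBot (nhds (0 - Real.log (1 - q))) := by
        simpa using h2.neg
      convert this using 2
      rw [one_div, Real.log_inv]
      ring
    have := le_of_tendsto hlim (Filter.Eventually.of_forall (fun l ↦ by
      simpa [hpz] using hDV l))
    calc 0 * Real.log (0 / q) + (1 - 0) * Real.log ((1 - 0) / (1 - q))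
        = Real.log (1 / (1 - q)) := by simp
      _ ≤ K := this
  by_cases hpo : p = 1
  · rw [hpo]
    have hrw : ∀ l : ℝ, l * 1 - Real.log (1 - q + q * Real.exp l)
        = - Real.log ((1 - q) * Real.exp (-l) + q) := by
      intro l
      have hA : 0 < (1 - q) * Real.exp (-l) + q := by
        have := Real.exp_pos (-l)
        nlinarith
      have : 1 - q + q * Real.exp l = Real.exp l * ((1 - q) * Real.exp (-l) + q) := by
        rw [mul_add, ← mul_assoc, mul_comm (Real.exp l) (1 - q), mul_assoc,
          ← Real.exp_add]
        simp [mul_comm]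
      rw [this, Real.log_mul (Real.exp_ne_zero l) hA.ne', Real.log_exp]
      ring
    have hlim : Filter.Tendsto (fun l : ℝ ↦ - Real.log ((1 - q) * Real.exp (-l) + q))
        Filter.atTop (nhds (Real.log (1 / q))) := by
      have h1 : Filter.Tendsto (fun l : ℝ ↦ (1 - q) * Real.exp (-l) + q) Filter.atTop
          (nhds ((1 - q) * 0 + q)) := by
        refine Filter.Tendsto.add ?_ tendsto_const_nhds
        exact (Real.tendsto_exp_atBot.comp Filter.tendsto_neg_atTop_atBot).const_mul (1 - q)
      have hc : ContinuousAt Real.log ((1 - q) * 0 + q) := by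
        refine Real.continuousAt_log ?_
        simp only [mul_zero, zero_add]
        exact hqpos.ne'
      have h2 := (hc.tendsto.comp h1).neg
      simp only [Function.comp, mul_zero, zero_add] at h2
      convert h2 using 2
      rw [one_div, Real.log_inv]
    have := le_of_tendsto hlim (Filter.Eventually.of_forall (fun l ↦ by
      rw [← hrw l]; simpa [hpo] using hDV l))
    calc 1 * Real.log (1 / q) + (1 - 1) * Real.log ((1 - 1) / (1 - q))
        = Real.log (1 / q) := by simp
      _ ≤ K := this
  -- 0 < p < 1 : plug the optimal l
  have hppos : 0 < p := lt_of_le_of_ne hp0 (Ne.symm hpz)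
  have hplt : p < 1 := lt_of_le_of_ne hp1 hpo
  set l0 : ℝ := Real.log (p * (1 - q) / (q * (1 - p))) with hl0
  have harg : 0 < p * (1 - q) / (q * (1 - p)) := by
    apply div_pos
    · nlinarith
    · nlinarith
  have hexpl0 : Real.exp l0 = p * (1 - q) / (q * (1 - p)) := Real.exp_log harg
  have hqne : q ≠ 0 := hqpos.ne'
  have h1pne : (1 : ℝ) - p ≠ 0 := by linarith
  have hval : 1 - q + q * Real.exp l0 = (1 - q) / (1 - p) := by
    rw [hexpl0]
    field_simp
    ring
  have hDV0 := hDV l0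
  rw [hval] at hDV0
  have hl0eq : l0 = Real.log p + Real.log (1 - q) - (Real.log q + Real.log (1 - p)) := by
    rw [hl0, Real.log_div (mul_ne_zero hppos.ne' (by linarith))
        (mul_ne_zero hqpos.ne' (by linarith)),
      Real.log_mul hppos.ne' (by linarith : (1 - q) ≠ 0),
      Real.log_mul hqpos.ne' (by linarith : (1 - p) ≠ 0)]
  have hgoal : p * Real.log (p / q) + (1 - p) * Real.log ((1 - p) / (1 - q))
      = l0 * p - Real.log ((1 - q) / (1 - p)) := by
    rw [hl0eq, Real.log_div hppos.ne' hqpos.ne',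
      Real.log_div (by linarith : (1 - p) ≠ 0) (by linarith : (1 - q) ≠ 0),
      Real.log_div (by linarith : (1 - q) ≠ 0) (by linarith : (1 - p) ≠ 0)]
    ring
  rw [hgoal]
  exact hDV0
end

section
/- In a canonical exponential family model, the optimal information quantity coincides with the re-parameterized divergence: for every θ ∈ Θ and every μ ∈ I with b'(θ) < μ, inf{ KL(ν_θ, ν_{θ'}) : θ' ∈ Θ, b'(θ') > μ } = d( b'(θ), μ ). -/
open MeasureTheory Real ENNReal
open scoped Classical

/-- The natural parameter set `Θ = {θ : ∫ e^{θx} dρ(x) < ∞}` of the exponential family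
with dominating measure `ρ`. -/
def natParam (ρ : Measure ℝ) : Set ℝ := {θ | Integrable (fun x => Real.exp (θ * x)) ρ}

/-- The log-partition function `b(θ) = log ∫ e^{θx} dρ(x)`. -/
noncomputable def logPartition (ρ : Measure ℝ) (θ : ℝ) : ℝ :=
  Real.log (∫ x, Real.exp (θ * x) ∂ρ)

/-- The member `ν_θ` of the canonical exponential family dominated by `ρ`, with density
`x ↦ exp(θx − b(θ))` with respect to `ρ`. -/
noncomputable def expFam (ρ : Measure ℝ) (θ : ℝ) : Measure ℝ :=
  ρ.withDensity fun x => ENNReal.ofReal (Real.exp (θ * x - logPartition ρ θ))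


section AuxLemmas

variable {ρ : Measure ℝ} [SigmaFinite ρ]

lemma exp_mul_le_add {s₁ s₂ s : ℝ} (a : ℝ) (h1 : s₁ ≤ s) (h2 : s ≤ s₂) :
    Real.exp (s * a) ≤ Real.exp (s₁ * a) + Real.exp (s₂ * a) := by
  rcases le_or_gt 0 a with ha | ha
  · exact le_add_of_nonneg_of_le (exp_pos _).le
      (exp_le_exp.2 (mul_le_mul_of_nonneg_right h2 ha))
  · exact le_add_of_le_of_nonneg
      (exp_le_exp.2 (mul_le_mul_of_nonpos_right h1 ha.le)) (exp_pos _).le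

lemma abs_mul_exp_le {δ : ℝ} (hδ : 0 < δ) (t a : ℝ) :
    |a| * Real.exp (t * a) ≤ δ⁻¹ * (Real.exp ((t + δ) * a) + Real.exp ((t - δ) * a)) := by
  have h1 : δ * |a| ≤ Real.exp (δ * |a|) :=
    (le_add_of_nonneg_right zero_le_one).trans (Real.add_one_le_exp _)
  have h2 : Real.exp (δ * |a|) ≤ Real.exp (δ * a) + Real.exp (-(δ * a)) := by
    rcases le_or_gt 0 a with ha | ha
    · rw [abs_of_nonneg ha]; exact le_add_of_nonneg_right (exp_pos _).le
    · rw [abs_of_neg ha, mul_neg]; exact le_add_of_nonneg_left (exp_pos _).le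
  have h3 : |a| ≤ δ⁻¹ * (Real.exp (δ * a) + Real.exp (-(δ * a))) := by
    rw [← mul_le_mul_iff_right₀ hδ, ← mul_assoc, mul_inv_cancel₀ hδ.ne', one_mul]
    exact h1.trans h2
  calc |a| * Real.exp (t * a)
      ≤ (δ⁻¹ * (Real.exp (δ * a) + Real.exp (-(δ * a)))) * Real.exp (t * a) :=
        mul_le_mul_of_nonneg_right h3 (exp_pos _).le
    _ = δ⁻¹ * (Real.exp ((t + δ) * a) + Real.exp ((t - δ) * a)) := by
        rw [mul_assoc, add_mul, ← Real.exp_add, ← Real.exp_add]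
        ring_nf

/-- Differentiability of the partition function, plus integrability of the mean integrand. -/
lemma hasDerivAt_partition (hopen : IsOpen (natParam ρ)) {t : ℝ} (ht : t ∈ natParam ρ) :
    Integrable (fun x => x * Real.exp (t * x)) ρ ∧
      HasDerivAt (fun s => ∫ x, Real.exp (s * x) ∂ρ) (∫ x, x * Real.exp (t * x) ∂ρ) t := by
  obtain ⟨ε, hε, hball⟩ := Metric.isOpen_iff.1 hopen t ht
  set δ := ε / 3 with hδdef
  have hδ : 0 < δ := by positivity
  have hmem : ∀ s : ℝ, |s - t| < 3 * δ → s ∈ natParam ρ := by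
    intro s hs
    exact hball (by simpa [Real.dist_eq, hδdef] using (by linarith [hs] : |s - t| < ε))
  have hp : (t + 2 * δ) ∈ natParam ρ := hmem _ (by rw [add_sub_cancel_left, abs_of_pos (by positivity)]; linarith)
  have hm : (t - 2 * δ) ∈ natParam ρ := hmem _ (by rw [sub_sub_cancel_left, abs_neg, abs_of_pos (by positivity)]; linarith)
  have key := hasDerivAt_integral_of_dominated_loc_of_deriv_le (μ := ρ)
    (F := fun s a => Real.exp (s * a)) (F' := fun s a => a * Real.exp (s * a))
    (x₀ := t) (s := Metric.ball t δ)
    (bound := fun a => δ⁻¹ * ((Real.exp ((t - 2*δ) * a) + Real.exp ((t + 2*δ) * a))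
      + (Real.exp ((t - 2*δ) * a) + Real.exp ((t + 2*δ) * a))))
    (Metric.ball_mem_nhds t hδ) ?_ ht ?_ ?_ ?_ ?_
  · exact key
  · filter_upwards with s
    exact (Real.continuous_exp.comp (continuous_const.mul continuous_id)).aestronglyMeasurable
  · exact (continuous_id.mul (Real.continuous_exp.comp
      (continuous_const.mul continuous_id))).aestronglyMeasurable
  · filter_upwards with a s hs
    rw [Real.norm_eq_abs, abs_mul, abs_of_pos (exp_pos _)]
    refine (abs_mul_exp_le hδ s a).trans ?_
    have hsd : |s - t| < δ := by simpa [Real.dist_eq] using hs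
    have b1 : Real.exp ((s + δ) * a) ≤ Real.exp ((t - 2*δ) * a) + Real.exp ((t + 2*δ) * a) :=
      exp_mul_le_add a (by cases abs_lt.1 hsd; linarith) (by cases abs_lt.1 hsd; linarith)
    have b2 : Real.exp ((s - δ) * a) ≤ Real.exp ((t - 2*δ) * a) + Real.exp ((t + 2*δ) * a) :=
      exp_mul_le_add a (by cases abs_lt.1 hsd; linarith) (by cases abs_lt.1 hsd; linarith)
    have := add_le_add b1 b2
    exact mul_le_mul_of_nonneg_left this (by positivity)
  · exact ((hm.add hp).add (hm.add hp)).const_mul _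
  · filter_upwards with a s _
    have h := ((hasDerivAt_id s).mul_const a).exp
    simpa [mul_comm] using h


lemma partition_pos (hρ : ρ ≠ 0) {t : ℝ} (ht : t ∈ natParam ρ) :
    0 < ∫ x, Real.exp (t * x) ∂ρ := by
  have : NeZero ρ := ⟨hρ⟩
  exact integral_exp_pos ht

lemma expFam_eq_tilted (hρ : ρ ≠ 0) {t : ℝ} (ht : t ∈ natParam ρ) :
    expFam ρ t = ρ.tilted (fun x => t * x) := by
  unfold expFam Measure.tilted
  congr 1
  funext x
  rw [Real.exp_sub, logPartition, Real.exp_log (partition_pos hρ ht)]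

lemma isProbabilityMeasure_expFam (hρ : ρ ≠ 0) {t : ℝ} (ht : t ∈ natParam ρ) :
    IsProbabilityMeasure (expFam ρ t) := by
  have : NeZero ρ := ⟨hρ⟩
  rw [expFam_eq_tilted hρ ht]
  exact isProbabilityMeasure_tilted ht

lemma integrable_expFam_iff {t : ℝ} (g : ℝ → ℝ) :
    Integrable g (expFam ρ t) ↔
      Integrable (fun x => g x * Real.exp (t * x - logPartition ρ t)) ρ := by
  unfold expFam
  rw [integrable_withDensity_iff]
  · simp_rw [ENNReal.toReal_ofReal (exp_nonneg _)]
  · exact (((measurable_const.mul measurable_id).sub measurable_const).exp).ennreal_ofReal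
  · filter_upwards with x using ofReal_lt_top

lemma integrable_id_expFam (hopen : IsOpen (natParam ρ)) {t : ℝ} (ht : t ∈ natParam ρ) :
    Integrable (fun x => x) (expFam ρ t) := by
  rw [integrable_expFam_iff]
  have : (fun x : ℝ => x * Real.exp (t * x - logPartition ρ t))
      = fun x => (Real.exp (logPartition ρ t))⁻¹ * (x * Real.exp (t * x)) := by
    funext x
    rw [Real.exp_sub]
    field_simp
  rw [this]
  exact ((hasDerivAt_partition hopen ht).1).const_mul _

lemma integrable_exp_expFam {t c : ℝ} (htc : (t + c) ∈ natParam ρ) :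
    Integrable (fun x => Real.exp (c * x)) (expFam ρ t) := by
  rw [integrable_expFam_iff]
  have : (fun x => Real.exp (c * x) * Real.exp (t * x - logPartition ρ t))
      = fun x => (Real.exp (logPartition ρ t))⁻¹ * Real.exp ((t + c) * x) := by
    funext x
    rw [Real.exp_sub, add_mul, Real.exp_add]
    field_simp
  rw [this]
  exact htc.const_mul _

lemma integral_expFam (hρ : ρ ≠ 0) {t : ℝ} (ht : t ∈ natParam ρ) (g : ℝ → ℝ) :
    ∫ x, g x ∂(expFam ρ t)
      = (∫ x, g x * Real.exp (t * x) ∂ρ) / ∫ x, Real.exp (t * x) ∂ρ := by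
  rw [expFam_eq_tilted hρ ht, integral_tilted]
  simp_rw [smul_eq_mul, div_mul_eq_mul_div, mul_comm (Real.exp _)]
  rw [integral_div]


noncomputable def expMean (ρ : Measure ℝ) (t : ℝ) : ℝ := ∫ x, x ∂(expFam ρ t)

noncomputable def klReal (ρ : Measure ℝ) (t₁ t₂ : ℝ) : ℝ :=
  (t₁ - t₂) * expMean ρ t₁ + logPartition ρ t₂ - logPartition ρ t₁

lemma hasDerivAt_logPartition (hρ : ρ ≠ 0) (hopen : IsOpen (natParam ρ)) {t : ℝ}
    (ht : t ∈ natParam ρ) : HasDerivAt (logPartition ρ) (expMean ρ t) t := by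
  have h := hasDerivAt_partition hopen ht
  have hpos := partition_pos hρ ht
  have hlog := h.2.log hpos.ne'
  have hmean : expMean ρ t
      = (∫ x, x * Real.exp (t * x) ∂ρ) / ∫ x, Real.exp (t * x) ∂ρ := by
    rw [expMean, integral_expFam hρ ht]
  rw [hmean]
  exact hlog

lemma deriv_logPartition (hρ : ρ ≠ 0) (hopen : IsOpen (natParam ρ)) {t : ℝ}
    (ht : t ∈ natParam ρ) : deriv (logPartition ρ) t = expMean ρ t :=
  (hasDerivAt_logPartition hρ hopen ht).deriv

lemma expFam_tilt (hρ : ρ ≠ 0) {t₁ t₂ : ℝ} (ht₁ : t₁ ∈ natParam ρ) (ht₂ : t₂ ∈ natParam ρ) :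
    expFam ρ t₂ = (expFam ρ t₁).tilted (fun x => (t₂ - t₁) * x) := by
  rw [expFam_eq_tilted hρ ht₂, expFam_eq_tilted hρ ht₁, tilted_tilted ht₁]
  congr 1
  funext x
  show t₂ * x = t₁ * x + (t₂ - t₁) * x
  ring

lemma integral_exp_expFam (hρ : ρ ≠ 0) {t₁ t₂ : ℝ} (ht₁ : t₁ ∈ natParam ρ)
    (ht₂ : t₂ ∈ natParam ρ) :
    ∫ x, Real.exp ((t₂ - t₁) * x) ∂(expFam ρ t₁)
      = Real.exp (logPartition ρ t₂ - logPartition ρ t₁) := by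
  rw [expFam_eq_tilted hρ ht₁,
    integral_exp_tilted (fun x => t₁ * x) (fun x => (t₂ - t₁) * x)]
  have : (fun x => Real.exp (((fun x => t₁ * x) + fun x => (t₂ - t₁) * x) x))
      = fun x => Real.exp (t₂ * x) := by
    funext x
    simp only [Pi.add_apply]
    ring_nf
  rw [this, Real.exp_sub, logPartition, logPartition, Real.exp_log (partition_pos hρ ht₂),
    Real.exp_log (partition_pos hρ ht₁)]

lemma integrable_exp_sub_expFam {t₁ t₂ : ℝ} (ht₁ : t₁ ∈ natParam ρ) (ht₂ : t₂ ∈ natParam ρ) :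
    Integrable (fun x => Real.exp ((t₂ - t₁) * x)) (expFam ρ t₁) :=
  integrable_exp_expFam (by rwa [add_sub_cancel])

lemma llr_expFam (hρ : ρ ≠ 0) (hopen : IsOpen (natParam ρ)) {t₁ t₂ : ℝ}
    (ht₁ : t₁ ∈ natParam ρ) (ht₂ : t₂ ∈ natParam ρ) :
    llr (expFam ρ t₁) (expFam ρ t₂) =ᵐ[expFam ρ t₁]
      fun x => (t₁ - t₂) * x + (logPartition ρ t₂ - logPartition ρ t₁) := by
  have hexp := integrable_exp_sub_expFam (ρ := ρ) ht₁ ht₂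
  haveI := isProbabilityMeasure_expFam hρ ht₁
  have h := llr_tilted_right (μ := expFam ρ t₁) (ν := expFam ρ t₁)
    (f := fun x => (t₂ - t₁) * x) Measure.AbsolutelyContinuous.rfl hexp
  have h0 : llr (expFam ρ t₁) (expFam ρ t₁) =ᵐ[expFam ρ t₁] fun _ => (0 : ℝ) := by
    filter_upwards [Measure.rnDeriv_self (expFam ρ t₁)] with x hx
    rw [llr, hx]
    simp
  rw [← expFam_tilt hρ ht₁ ht₂] at h
  filter_upwards [h, h0] with x hx hx0
  rw [hx, hx0, integral_exp_expFam hρ ht₁ ht₂, Real.log_exp]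
  ring

lemma KLdiv_expFam_eq (hρ : ρ ≠ 0) (hopen : IsOpen (natParam ρ)) {t₁ t₂ : ℝ}
    (ht₁ : t₁ ∈ natParam ρ) (ht₂ : t₂ ∈ natParam ρ) :
    KLdiv (expFam ρ t₁) (expFam ρ t₂) = ENNReal.ofReal (klReal ρ t₁ t₂) := by
  have hprob := isProbabilityMeasure_expFam hρ ht₁
  have hexp := integrable_exp_sub_expFam (ρ := ρ) ht₁ ht₂
  have hAC : expFam ρ t₁ ≪ expFam ρ t₂ := by
    rw [expFam_tilt hρ ht₁ ht₂]
    exact absolutelyContinuous_tilted hexp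
  have hxint : Integrable (fun x => x) (expFam ρ t₁) := integrable_id_expFam hopen ht₁
  have hgint : Integrable (fun x => (t₁ - t₂) * x) (expFam ρ t₁) := hxint.const_mul _
  have hllr := llr_expFam hρ hopen ht₁ ht₂
  have hint : Integrable (llr (expFam ρ t₁) (expFam ρ t₂)) (expFam ρ t₁) :=
    (hgint.add (integrable_const _)).congr hllr.symm
  have hI : ∫ x, llr (expFam ρ t₁) (expFam ρ t₂) x ∂(expFam ρ t₁) = klReal ρ t₁ t₂ := by
    rw [integral_congr_ae hllr, integral_add hgint (integrable_const _),
      MeasureTheory.integral_const_mul]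
    simp only [integral_const, measure_univ, probReal_univ, ENNReal.toReal_one, smul_eq_mul, one_mul]
    rw [klReal, expMean]
    ring
  rw [KLdiv, if_pos ⟨hAC, hint⟩, hI]

lemma klReal_pos (hρ : ρ ≠ 0) (hopen : IsOpen (natParam ρ))
    (hnondeg : ¬ ∃ c : ℝ, ρ {c}ᶜ = 0) {t₁ t₂ : ℝ}
    (ht₁ : t₁ ∈ natParam ρ) (ht₂ : t₂ ∈ natParam ρ) (hne : t₁ ≠ t₂) :
    0 < klReal ρ t₁ t₂ := by
  haveI := isProbabilityMeasure_expFam hρ ht₁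
  set μ := expFam ρ t₁ with hμdef
  set C := logPartition ρ t₂ - logPartition ρ t₁ with hCdef
  have hexp : Integrable (fun x => Real.exp ((t₂ - t₁) * x)) μ :=
    integrable_exp_sub_expFam ht₁ ht₂
  have hxint : Integrable (fun x => x) μ := integrable_id_expFam hopen ht₁
  have hZ : ∫ x, Real.exp ((t₂ - t₁) * x) ∂μ = Real.exp C :=
    integral_exp_expFam hρ ht₁ ht₂
  -- the nonnegative integrand
  set h : ℝ → ℝ := fun x => Real.exp ((t₂ - t₁) * x - C) - 1 - ((t₂ - t₁) * x - C)
    with hhdef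
  have hh_nonneg : ∀ x, 0 ≤ h x := by
    intro x
    have := Real.add_one_le_exp ((t₂ - t₁) * x - C)
    simp only [hhdef]
    linarith
  have hr_int : Integrable (fun x => Real.exp ((t₂ - t₁) * x - C)) μ := by
    have : (fun x => Real.exp ((t₂ - t₁) * x - C))
        = fun x => Real.exp ((t₂ - t₁) * x) / Real.exp C := by
      funext x; rw [Real.exp_sub]
    rw [this]
    exact hexp.div_const _
  have hr_integral : ∫ x, Real.exp ((t₂ - t₁) * x - C) ∂μ = 1 := by
    have : (fun x => Real.exp ((t₂ - t₁) * x - C))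
        = fun x => Real.exp ((t₂ - t₁) * x) / Real.exp C := by
      funext x; rw [Real.exp_sub]
    rw [this, integral_div, hZ, div_self (Real.exp_pos _).ne']
  have hlin_int : Integrable (fun x => (t₂ - t₁) * x - C) μ :=
    (hxint.const_mul _).sub (integrable_const _)
  have hh_int : Integrable h μ := (hr_int.sub (integrable_const 1)).sub hlin_int
  have hh_integral : ∫ x, h x ∂μ = klReal ρ t₁ t₂ := by
    simp only [hhdef]
    have h1 : Integrable (fun x => Real.exp ((t₂ - t₁) * x - C) - 1) μ :=
      hr_int.sub (integrable_const 1)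
    rw [integral_sub h1 hlin_int,
      integral_sub hr_int (integrable_const 1),
      integral_sub (hxint.const_mul _) (integrable_const _),
      MeasureTheory.integral_const_mul, hr_integral]
    simp only [integral_const, measure_univ, probReal_univ, ENNReal.toReal_one, smul_eq_mul, one_mul]
    rw [klReal, expMean, hCdef]
    ring
  have hnonneg : 0 ≤ klReal ρ t₁ t₂ := by
    rw [← hh_integral]
    exact integral_nonneg hh_nonneg
  rcases hnonneg.lt_or_eq with hpos | heq
  · exact hpos
  -- equality case: contradiction with nondegeneracy
  exfalso
  have hae : h =ᵐ[μ] 0 := by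
    rw [← integral_eq_zero_iff_of_nonneg hh_nonneg hh_int, hh_integral, ← heq]
  set p := C / (t₂ - t₁) with hpdef
  have hsub : t₂ - t₁ ≠ 0 := sub_ne_zero.2 (Ne.symm hne)
  have haep : ∀ᵐ x ∂μ, x = p := by
    filter_upwards [hae] with x hx
    have hx' : Real.exp ((t₂ - t₁) * x - C) - 1 - ((t₂ - t₁) * x - C) = 0 := hx
    have hzero : (t₂ - t₁) * x - C = 0 := by
      by_contra hne0
      have := Real.add_one_lt_exp hne0
      linarith
    rw [hpdef]
    field_simp
    linarith
  have hμp : μ {p}ᶜ = 0 := by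
    have := ae_iff.1 haep
    exact this
  have hρp : ρ {p}ᶜ = 0 := by
    have hw : Measurable fun x => ENNReal.ofReal (Real.exp (t₁ * x - logPartition ρ t₁)) :=
      (((measurable_const.mul measurable_id).sub measurable_const).exp).ennreal_ofReal
    have h0 := (withDensity_apply_eq_zero hw).1 hμp
    have huniv : {x : ℝ | ENNReal.ofReal (Real.exp (t₁ * x - logPartition ρ t₁)) ≠ 0}
        = Set.univ := by
      ext x
      simp [ENNReal.ofReal_eq_zero, not_le, Real.exp_pos]
    rwa [huniv, Set.univ_inter] at h0
  exact hnondeg ⟨p, hρp⟩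

lemma expMean_strictMono (hρ : ρ ≠ 0) (hopen : IsOpen (natParam ρ))
    (hnondeg : ¬ ∃ c : ℝ, ρ {c}ᶜ = 0) {t₁ t₂ : ℝ}
    (ht₁ : t₁ ∈ natParam ρ) (ht₂ : t₂ ∈ natParam ρ) (h : t₁ < t₂) :
    expMean ρ t₁ < expMean ρ t₂ := by
  have h1 := klReal_pos hρ hopen hnondeg ht₁ ht₂ h.ne
  have h2 := klReal_pos hρ hopen hnondeg ht₂ ht₁ h.ne'
  rw [klReal] at h1 h2
  nlinarith

end AuxLemmas

/-- In a canonical regular exponential family, the optimal information quantity coincides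
with the re-parameterized divergence `d`: for `θ ∈ Θ` and `μ ∈ I = b'(Θ)` with
`b'(θ) < μ`, say `μ = b'(θ_μ)` with `θ_μ ∈ Θ` (recall that `b'` is injective, being
strictly increasing), one has
`inf{ KL(ν_θ, ν_{θ'}) : θ' ∈ Θ, b'(θ') > μ } = d(b'(θ), μ) = KL(ν_θ, ν_{θ_μ})`. -/
theorem Kinf_expFam_eq_d (ρ : Measure ℝ) [SigmaFinite ρ]
    (hnondeg : ¬ ∃ c : ℝ, ρ {c}ᶜ = 0)
    (hopen : IsOpen (natParam ρ)) (hne : (natParam ρ).Nonempty)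
    (θ θμ : ℝ) (hθ : θ ∈ natParam ρ) (hθμ : θμ ∈ natParam ρ)
    (hlt : deriv (logPartition ρ) θ < deriv (logPartition ρ) θμ) :
    (⨅ θ' ∈ {θ' ∈ natParam ρ |
        deriv (logPartition ρ) θμ < deriv (logPartition ρ) θ'},
      KLdiv (expFam ρ θ) (expFam ρ θ'))
      = KLdiv (expFam ρ θ) (expFam ρ θμ) := by
  have hρ : ρ ≠ 0 := fun h => hnondeg ⟨0, by simp [h]⟩
  have hd : ∀ t ∈ natParam ρ, deriv (logPartition ρ) t = expMean ρ t := fun t ht =>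
    deriv_logPartition hρ hopen ht
  rw [hd θ hθ, hd θμ hθμ] at hlt
  have hmono : ∀ t₁ ∈ natParam ρ, ∀ t₂ ∈ natParam ρ, t₁ < t₂ →
      expMean ρ t₁ < expMean ρ t₂ := fun t₁ h1 t₂ h2 h =>
    expMean_strictMono hρ hopen hnondeg h1 h2 h
  have hrev : ∀ t₁ ∈ natParam ρ, ∀ t₂ ∈ natParam ρ,
      expMean ρ t₁ < expMean ρ t₂ → t₁ < t₂ := by
    intro t₁ h1 t₂ h2 hm
    by_contra hle
    push_neg at hle
    rcases hle.lt_or_eq with h | h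
    · exact absurd (hmono t₂ h2 t₁ h1 h) (by linarith)
    · rw [h] at hm; exact lt_irrefl _ hm
  have hθθμ : θ < θμ := hrev θ hθ θμ hθμ hlt
  rw [KLdiv_expFam_eq hρ hopen hθ hθμ]
  refine le_antisymm ?_ ?_
  · apply ENNReal.le_of_forall_pos_le_add
    intro ε hε _
    have hεR : (0 : ℝ) < (ε : ℝ) := hε
    have hb : ContinuousAt (logPartition ρ) θμ :=
      (hasDerivAt_logPartition hρ hopen hθμ).continuousAt
    have hF : ContinuousAt (fun t => klReal ρ θ t) θμ := by
      have : (fun t => klReal ρ θ t)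
          = fun t => (θ - t) * expMean ρ θ + logPartition ρ t - logPartition ρ θ := by
        funext t; rw [klReal]
      rw [this]
      exact (((continuousAt_const.sub continuousAt_id).mul continuousAt_const).add hb).sub
        continuousAt_const
    have hU : {t | klReal ρ θ t < klReal ρ θ θμ + ε} ∈ nhds θμ :=
      hF (Iio_mem_nhds (lt_add_of_pos_right _ hεR))
    have hmemS : ({t | klReal ρ θ t < klReal ρ θ θμ + ε} ∩ natParam ρ) ∩ Set.Ioi θμ
        ∈ nhdsWithin θμ (Set.Ioi θμ) :=
      Filter.inter_mem (nhdsWithin_le_nhds (Filter.inter_mem hU (hopen.mem_nhds hθμ)))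
        self_mem_nhdsWithin
    obtain ⟨t', ⟨⟨hFt', ht'Θ⟩, ht'gt⟩⟩ := Filter.nonempty_of_mem hmemS
    refine le_trans (iInf₂_le t' ?_) ?_
    · exact ⟨ht'Θ, by rw [hd _ hθμ, hd _ ht'Θ]; exact hmono θμ hθμ t' ht'Θ ht'gt⟩
    · rw [KLdiv_expFam_eq hρ hopen hθ ht'Θ]
      calc ENNReal.ofReal (klReal ρ θ t') ≤ ENNReal.ofReal (klReal ρ θ θμ + ε) :=
            ENNReal.ofReal_le_ofReal hFt'.le
        _ ≤ ENNReal.ofReal (klReal ρ θ θμ) + ENNReal.ofReal ε := ENNReal.ofReal_add_le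
        _ = ENNReal.ofReal (klReal ρ θ θμ) + ε := by rw [ENNReal.ofReal_coe_nnreal]
  · refine le_iInf₂ fun t' ht' => ?_
    obtain ⟨ht'Θ, ht'd⟩ := ht'
    rw [hd _ hθμ, hd _ ht'Θ] at ht'd
    have ht'gt : θμ < t' := hrev θμ hθμ t' ht'Θ ht'd
    rw [KLdiv_expFam_eq hρ hopen hθ ht'Θ]
    apply ENNReal.ofReal_le_ofReal
    have hpos := klReal_pos hρ hopen hnondeg hθμ ht'Θ ht'gt.ne
    rw [klReal] at hpos ⊢
    rw [klReal]
    nlinarith [mul_lt_mul_of_pos_left hlt (sub_pos.2 ht'gt)]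
end
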